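/- If the energy of a k-uniform hypergraph H is a rational number, then it is an even integer. -/

import Mathlib

open Matrix BigOperators

set_option linter.unusedSectionVars false

variable {V : Type*} [Fintype V] [DecidableEq V]

/-- Adjacency matrix of a (multi-)hypergraph given by its multiset of edges:
entry `(i,j)` is the number of edges containing both `i` and `j`, with zero diagonal. -/
def adjacencyMatrix (E : Multiset (Finset V)) : Matrix V V ℝ :=
  Matrix.of fun i j => if i = j then 0 else ((E.filter (fun e => i ∈ e ∧ j ∈ e)).card : ℝ)

lemma adjacency_isHermitian (E : Multiset (Finset V)) : (adjacencyMatrix E).IsHermitian := by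
  unfold Matrix.IsHermitian
  ext i j
  by_cases h : i = j
  · subst h; simp [adjacencyMatrix]
  · simp only [adjacencyMatrix, Matrix.conjTranspose_apply, Matrix.of_apply, h, Ne.symm h,
      if_false, star_trivial]
    congr 1
    exact congrArg Multiset.card (Multiset.filter_congr (fun e _ => and_comm))

/-- Energy of a (multi-)hypergraph: sum of the absolute values of the adjacency eigenvalues. -/
noncomputable def energy (E : Multiset (Finset V)) : ℝ :=
  ∑ i, |(adjacency_isHermitian E).eigenvalues i|

/-- Degree of a vertex: the number of edges containing it. -/
def hdegree (E : Multiset (Finset V)) (v : V) : ℕ := (E.filter (fun e => v ∈ e)).card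

/-- Zagreb index: sum of squares of vertex degrees. -/
def zagreb (E : Multiset (Finset V)) : ℕ := ∑ v, (hdegree E v)^2


open Polynomial in
lemma eigenvalue_isIntegral_of_intMatrix (M : Matrix V V ℤ) (A : Matrix V V ℝ)
    (hMA : A = M.map (Int.cast : ℤ → ℝ)) (μ : ℝ) (h : μ ∈ spectrum ℝ A) :
    IsIntegral ℤ μ := by
  have hroot : A.charpoly.IsRoot μ := by
    rw [spectrum.mem_iff] at h
    have hdet : (scalar V μ - A).det = 0 := by
      by_contra hd
      exact h ((Matrix.isUnit_iff_isUnit_det _).mpr (isUnit_iff_ne_zero.mpr hd))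
    have heq : A.charpoly.eval μ = ((charmatrix A).map (evalRingHom μ)).det := by
      rw [Matrix.charpoly]; exact (RingHom.map_det (evalRingHom μ) _)
    rw [Polynomial.IsRoot, heq]
    convert hdet
    ext i j
    by_cases hij : i = j
    · subst hij; simp [charmatrix_apply_eq, Matrix.scalar_apply]
    · simp [charmatrix_apply_ne _ _ _ hij, Matrix.scalar_apply, Matrix.one_apply_ne hij,
        Matrix.diagonal_apply_ne _ hij]
  refine ⟨M.charpoly, M.charpoly_monic, ?_⟩
  have : A.charpoly = M.charpoly.map (Int.castRingHom ℝ) := by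
    rw [hMA]; exact Matrix.charpoly_map M (Int.castRingHom ℝ)
  rw [eval₂_eq_eval_map]
  rw [Polynomial.IsRoot, this] at hroot
  exact hroot

lemma trace_eq_sum_eigenvalues_real (A : Matrix V V ℝ) (hA : A.IsHermitian) :
    A.trace = ∑ i, hA.eigenvalues i := by
  nth_rewrite 1 [hA.spectral_theorem]
  rw [Unitary.conjStarAlgAut_apply]
  rw [Matrix.trace_mul_cycle]
  rw [(Matrix.mem_unitaryGroup_iff').mp (hA.eigenvectorUnitary).2]
  rw [Matrix.one_mul, Matrix.trace_diagonal]
  rfl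

/-- if the energy of a `k`-uniform hypergraph is rational, then it is an
even integer. -/
theorem stmt_8 (k : ℕ) (hk : 2 ≤ k) (E : Finset (Finset V))
    (hunif : ∀ e ∈ E, e.card = k)
    (hq : ∃ q : ℚ, energy E.val = (q : ℝ)) :
    ∃ z : ℤ, energy E.val = ((2 * z : ℤ) : ℝ) := by
  classical
  obtain ⟨q, hq⟩ := hq
  set A := adjacencyMatrix (V := V) E.val with hA
  set hH := adjacency_isHermitian (V := V) E.val
  -- integer matrix
  set M : Matrix V V ℤ := Matrix.of fun i j =>
      if i = j then 0 else ((E.val.filter (fun e => i ∈ e ∧ j ∈ e)).card : ℤ) with hM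
  have hMA : A = M.map (Int.cast : ℤ → ℝ) := by
    ext i j
    by_cases h : i = j <;> simp [hA, hM, adjacencyMatrix, Matrix.map_apply, h]
  -- each eigenvalue is integral over ℤ
  have hint : ∀ i, IsIntegral ℤ (hH.eigenvalues i) := fun i =>
    eigenvalue_isIntegral_of_intMatrix M A hMA _ (hH.eigenvalues_mem_spectrum_real i)
  -- trace is zero
  have htr : (∑ i, hH.eigenvalues i) = 0 := by
    rw [← trace_eq_sum_eigenvalues_real A hH]
    simp [Matrix.trace, Matrix.diag, hA, adjacencyMatrix]
  -- energy = 2 * sum over positive eigenvalues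
  set s : Finset V := Finset.univ.filter (fun i => 0 < hH.eigenvalues i) with hs
  have hsplit : energy E.val = 2 * ∑ i ∈ s, hH.eigenvalues i := by
    have h1 : energy E.val = ∑ i ∈ s, hH.eigenvalues i
        + ∑ i ∈ sᶜ, -(hH.eigenvalues i) := by
      rw [energy, ← Finset.sum_filter_add_sum_filter_not Finset.univ
        (fun i => 0 < hH.eigenvalues i) (fun i => |hH.eigenvalues i|)]
      congr 1
      · exact Finset.sum_congr rfl fun i hi =>
          abs_of_pos (Finset.mem_filter.mp hi).2
      · refine Finset.sum_congr ?_ fun i hi => ?_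
        · ext i; simp [hs, Finset.mem_compl]
        · have : ¬ 0 < hH.eigenvalues i := by
            have := Finset.mem_compl.mp hi
            simpa [hs] using this
          exact abs_of_nonpos (le_of_not_gt this)
    have h2 : (∑ i ∈ s, hH.eigenvalues i) + ∑ i ∈ sᶜ, hH.eigenvalues i = 0 := by
      rw [Finset.sum_add_sum_compl]; exact htr
    rw [h1, Finset.sum_neg_distrib]
    linarith
  set t : ℝ := ∑ i ∈ s, hH.eigenvalues i with ht
  have htint : IsIntegral ℤ t := IsIntegral.sum _ fun i _ => hint i
  -- t is rational: t = q/2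
  have htq : t = ((q / 2 : ℚ) : ℝ) := by
    have : (q : ℝ) = 2 * t := by rw [← hq, hsplit]
    push_cast
    linarith
  have hqint : IsIntegral ℤ (q / 2 : ℚ) := by
    rw [htq] at htint
    exact (isIntegral_algebraMap_iff (algebraMap ℚ ℝ).injective).mp (by exact_mod_cast htint)
  obtain ⟨z, hz⟩ := IsIntegrallyClosed.isIntegral_iff.mp hqint
  refine ⟨z, ?_⟩
  have hz' : (z : ℚ) = q / 2 := hz
  rw [hsplit, htq, ← hz']
  push_cast
  ring
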